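/- arXiv:math/0307279 — 2 statements merged into one kernel-verified Lean document; each statement's English description precedes it below -/
import Mathlib

section
/- For every real x > 0, the Bessel function of the first kind of order 2 satisfies |J₂(x)| ≤ x^{−1/2}. -/
open Finset

namespace BesselAux

noncomputable def t0 (x : ℝ) (k : ℕ) : ℝ :=
  (-1 : ℝ) ^ k * (x / 2) ^ (2 * k + 2) / ((Nat.factorial k : ℝ) * (Nat.factorial (k + 2) : ℝ))

noncomputable def t1 (x : ℝ) (k : ℕ) : ℝ :=
  (-1 : ℝ) ^ k * (((k : ℝ) + 1) * (x / 2) ^ (2 * k + 1)) /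
    ((Nat.factorial k : ℝ) * (Nat.factorial (k + 2) : ℝ))

noncomputable def t2 (x : ℝ) (k : ℕ) : ℝ :=
  (-1 : ℝ) ^ k * (((k : ℝ) + 1) * (2 * (k : ℝ) + 1) / 2 * (x / 2) ^ (2 * k)) /
    ((Nat.factorial k : ℝ) * (Nat.factorial (k + 2) : ℝ))

noncomputable def bf (x : ℝ) : ℝ := ∑' k, t0 x k
noncomputable def bg (x : ℝ) : ℝ := ∑' k, t1 x k
noncomputable def bh (x : ℝ) : ℝ := ∑' k, t2 x k

lemma fact_pos (k : ℕ) : (0:ℝ) < (Nat.factorial k : ℝ) := by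
  exact_mod_cast Nat.factorial_pos k

lemma sq_le_four_pow (k : ℕ) : ((k : ℝ) + 1) ^ 2 ≤ 4 * 4 ^ k := by
  have h : (k : ℝ) + 1 ≤ 2 * 2 ^ k := by
    have h1 : (k : ℝ) < 2 ^ k := by exact_mod_cast Nat.lt_two_pow_self (n := k)
    have h2 : (1:ℝ) ≤ 2 ^ k := one_le_pow₀ (by norm_num)
    linarith
  have hk : (0:ℝ) ≤ (k:ℝ) + 1 := by positivity
  have e : (2:ℝ)^k * 2^k = 4^k := by rw [← mul_pow]; norm_num
  nlinarith [mul_self_le_mul_self hk h]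

lemma summable_master (r : ℝ) (hr : 0 ≤ r) :
    Summable (fun k : ℕ => ((k : ℝ) + 1) ^ 2 * r ^ k / (Nat.factorial k : ℝ)) := by
  have hS : Summable (fun k : ℕ => 4 * ((4 * r) ^ k / (Nat.factorial k : ℝ))) :=
    (Real.summable_pow_div_factorial (4 * r)).mul_left 4
  refine Summable.of_nonneg_of_le (fun k => by positivity) (fun k => ?_) hS
  have h1 : ((k : ℝ) + 1) ^ 2 * r ^ k ≤ 4 * (4 * r) ^ k := by
    rw [mul_pow]
    have := sq_le_four_pow k
    have hrk : (0:ℝ) ≤ r ^ k := by positivity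
    nlinarith
  calc ((k : ℝ) + 1) ^ 2 * r ^ k / (Nat.factorial k : ℝ)
      ≤ (4 * (4*r)^k) / (Nat.factorial k : ℝ) := by gcongr
    _ = 4 * ((4 * r) ^ k / (Nat.factorial k : ℝ)) := by ring

noncomputable def mB (s : ℝ) (k : ℕ) : ℝ := (1 + s) ^ 2 * (((k : ℝ) + 1) ^ 2 * ((1 + s) ^ 2) ^ k / (Nat.factorial k : ℝ))

lemma summable_mB (s : ℝ) : Summable (mB s) := by
  unfold mB
  exact (summable_master ((1+s)^2) (by positivity)).mul_left ((1+s)^2)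

lemma one_le_fact (k : ℕ) : (1:ℝ) ≤ (Nat.factorial k : ℝ) := by
  exact_mod_cast Nat.one_le_iff_ne_zero.mpr (Nat.factorial_ne_zero _)

lemma abs_half_le {x s : ℝ} (hs : 0 ≤ s) (hx : |x| ≤ s) : |x / 2| ≤ 1 + s := by
  rw [abs_div, abs_two]
  calc |x| / 2 ≤ s / 2 := by linarith
  _ ≤ 1 + s := by linarith

lemma one_le_splus {s : ℝ} (hs : 0 ≤ s) : (1:ℝ) ≤ 1 + s := by linarith

lemma abs_t0_le {x s : ℝ} (hs : 0 ≤ s) (hx : |x| ≤ s) (k : ℕ) : |t0 x k| ≤ mB s k := by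
  have key : |t0 x k| = |x/2| ^ (2*k+2) / ((Nat.factorial k : ℝ) * (Nat.factorial (k + 2) : ℝ)) := by
    rw [t0, abs_div, abs_mul, abs_pow, abs_pow, abs_neg, abs_one, one_pow, one_mul,
      abs_mul, Nat.abs_cast, Nat.abs_cast]
  rw [key, mB]
  have hA : |x/2|^(2*k+2) ≤ (1+s)^2 * (((k:ℝ)+1)^2 * ((1+s)^2)^k) := by
    calc |x/2|^(2*k+2) ≤ (1+s)^(2*k+2) := pow_le_pow_left₀ (abs_nonneg _) (abs_half_le hs hx) _
    _ = (1+s)^2 * (1 * ((1+s)^2)^k) := by rw [pow_add, pow_mul]; ring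
    _ ≤ (1+s)^2 * (((k:ℝ)+1)^2 * ((1+s)^2)^k) := by
        gcongr
        nlinarith [Nat.cast_nonneg (α := ℝ) k]
  calc |x/2|^(2*k+2) / ((Nat.factorial k : ℝ) * (Nat.factorial (k + 2) : ℝ))
      ≤ ((1+s)^2 * (((k:ℝ)+1)^2 * ((1+s)^2)^k)) / ((Nat.factorial k : ℝ) * 1) := by
        apply div_le_div₀ (by positivity) hA (by simpa using fact_pos k)
        nlinarith [fact_pos k, one_le_fact (k+2)]
    _ = (1 + s) ^ 2 * (((k : ℝ) + 1) ^ 2 * ((1 + s) ^ 2) ^ k / (Nat.factorial k : ℝ)) := by ring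

lemma abs_t1_le {x s : ℝ} (hs : 0 ≤ s) (hx : |x| ≤ s) (k : ℕ) : |t1 x k| ≤ mB s k := by
  have key : |t1 x k| = (((k:ℝ)+1) * |x/2| ^ (2*k+1)) / ((Nat.factorial k : ℝ) * (Nat.factorial (k + 2) : ℝ)) := by
    rw [t1, abs_div, abs_mul, abs_mul, abs_pow, abs_pow, abs_neg, abs_one, one_pow, one_mul,
      abs_mul, Nat.abs_cast, Nat.abs_cast, abs_of_nonneg (by positivity : (0:ℝ) ≤ (k:ℝ)+1)]
  rw [key, mB]
  have hk1 : (1:ℝ) ≤ (k:ℝ) + 1 := by simp [Nat.cast_nonneg]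
  have hA : ((k:ℝ)+1) * |x/2|^(2*k+1) ≤ (1+s)^2 * (((k:ℝ)+1)^2 * ((1+s)^2)^k) := by
    have hc : (0:ℝ) ≤ (1+s)^2*((1+s)^2)^k := by positivity
    have hkk : ((k:ℝ)+1) ≤ ((k:ℝ)+1)^2 := by nlinarith [Nat.cast_nonneg (α := ℝ) k]
    calc ((k:ℝ)+1) * |x/2|^(2*k+1)
        ≤ ((k:ℝ)+1) * (1+s)^(2*k+1) :=
          mul_le_mul_of_nonneg_left
            (pow_le_pow_left₀ (abs_nonneg _) (abs_half_le hs hx) _) (by positivity)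
    _ ≤ ((k:ℝ)+1) * (1+s)^(2*k+2) :=
          mul_le_mul_of_nonneg_left
            (pow_le_pow_right₀ (one_le_splus hs) (by omega)) (by positivity)
    _ = ((k:ℝ)+1) * ((1+s)^2 * ((1+s)^2)^k) := by rw [pow_add, pow_mul]; ring
    _ ≤ ((k:ℝ)+1)^2 * ((1+s)^2 * ((1+s)^2)^k) := mul_le_mul_of_nonneg_right hkk hc
    _ = (1+s)^2 * (((k:ℝ)+1)^2 * ((1+s)^2)^k) := by ring
  calc (((k:ℝ)+1) * |x/2|^(2*k+1)) / ((Nat.factorial k : ℝ) * (Nat.factorial (k + 2) : ℝ))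
      ≤ ((1+s)^2 * (((k:ℝ)+1)^2 * ((1+s)^2)^k)) / ((Nat.factorial k : ℝ) * 1) := by
        apply div_le_div₀ (by positivity) hA (by simpa using fact_pos k)
        nlinarith [fact_pos k, one_le_fact (k+2)]
    _ = (1 + s) ^ 2 * (((k : ℝ) + 1) ^ 2 * ((1 + s) ^ 2) ^ k / (Nat.factorial k : ℝ)) := by ring

lemma abs_t2_le {x s : ℝ} (hs : 0 ≤ s) (hx : |x| ≤ s) (k : ℕ) : |t2 x k| ≤ mB s k := by
  have key : |t2 x k| = (((k:ℝ)+1) * (2*(k:ℝ)+1)/2 * |x/2| ^ (2*k)) / ((Nat.factorial k : ℝ) * (Nat.factorial (k + 2) : ℝ)) := by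
    rw [t2, abs_div, abs_mul, abs_mul, abs_pow, abs_pow, abs_neg, abs_one, one_pow, one_mul,
      abs_mul, Nat.abs_cast, Nat.abs_cast,
      abs_of_nonneg (by positivity : (0:ℝ) ≤ ((k:ℝ)+1)*(2*(k:ℝ)+1)/2)]
  rw [key, mB]
  have hA : ((k:ℝ)+1) * (2*(k:ℝ)+1)/2 * |x/2|^(2*k) ≤ (1+s)^2 * (((k:ℝ)+1)^2 * ((1+s)^2)^k) := by
    have h1 : |x/2|^(2*k) ≤ ((1+s)^2)^k := by
      rw [← pow_mul]
      exact pow_le_pow_left₀ (abs_nonneg _) (abs_half_le hs hx) _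
    have h2 : ((k:ℝ)+1) * (2*(k:ℝ)+1)/2 ≤ ((k:ℝ)+1)^2 := by nlinarith [Nat.cast_nonneg (α := ℝ) k]
    have h3 : (1:ℝ) ≤ (1+s)^2 := by nlinarith
    calc ((k:ℝ)+1) * (2*(k:ℝ)+1)/2 * |x/2|^(2*k)
        ≤ ((k:ℝ)+1)^2 * ((1+s)^2)^k := mul_le_mul h2 h1 (by positivity) (by positivity)
    _ = 1 * (((k:ℝ)+1)^2 * ((1+s)^2)^k) := by ring
    _ ≤ (1+s)^2 * (((k:ℝ)+1)^2 * ((1+s)^2)^k) :=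
          mul_le_mul_of_nonneg_right h3 (by positivity)
  calc ((k:ℝ)+1) * (2*(k:ℝ)+1)/2 * |x/2|^(2*k) / ((Nat.factorial k : ℝ) * (Nat.factorial (k + 2) : ℝ))
      ≤ ((1+s)^2 * (((k:ℝ)+1)^2 * ((1+s)^2)^k)) / ((Nat.factorial k : ℝ) * 1) := by
        apply div_le_div₀ (by positivity) hA (by simpa using fact_pos k)
        nlinarith [fact_pos k, one_le_fact (k+2)]
    _ = (1 + s) ^ 2 * (((k : ℝ) + 1) ^ 2 * ((1 + s) ^ 2) ^ k / (Nat.factorial k : ℝ)) := by ring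

lemma summable_t0 (x : ℝ) : Summable (t0 x) :=
  Summable.of_norm_bounded (summable_mB |x|) (fun k => by
    simpa [Real.norm_eq_abs] using abs_t0_le (abs_nonneg x) le_rfl k)

lemma summable_t1 (x : ℝ) : Summable (t1 x) :=
  Summable.of_norm_bounded (summable_mB |x|) (fun k => by
    simpa [Real.norm_eq_abs] using abs_t1_le (abs_nonneg x) le_rfl k)

lemma summable_t2 (x : ℝ) : Summable (t2 x) :=
  Summable.of_norm_bounded (summable_mB |x|) (fun k => by
    simpa [Real.norm_eq_abs] using abs_t2_le (abs_nonneg x) le_rfl k)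

end BesselAux

namespace BesselAux

lemma hasDerivAt_term0 (k : ℕ) (x : ℝ) : HasDerivAt (fun y => t0 y k) (t1 x k) x := by
  have h : HasDerivAt (fun y : ℝ => y / 2) (1/2) x := (hasDerivAt_id x).div_const 2
  have hp : HasDerivAt (fun y : ℝ => (y/2) ^ (2*k+2))
      ((2*k+2 : ℕ) * (x/2) ^ (2*k+2-1) * (1/2)) x := h.pow _
  have : HasDerivAt (fun y => t0 y k) _ x := (hp.const_mul ((-1:ℝ)^k)).div_const ((Nat.factorial k : ℝ) * (Nat.factorial (k + 2) : ℝ))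
  convert this using 1
  · show t1 x k = _
    rw [t1]
    have : 2*k+2-1 = 2*k+1 := by omega
    rw [this]
    push_cast
    ring

lemma hasDerivAt_term1 (k : ℕ) (x : ℝ) : HasDerivAt (fun y => t1 y k) (t2 x k) x := by
  have h : HasDerivAt (fun y : ℝ => y / 2) (1/2) x := (hasDerivAt_id x).div_const 2
  have hp : HasDerivAt (fun y : ℝ => (y/2) ^ (2*k+1))
      ((2*k+1 : ℕ) * (x/2) ^ (2*k+1-1) * (1/2)) x := h.pow _
  have : HasDerivAt (fun y : ℝ => (-1:ℝ)^k * ((k:ℝ)+1) * (y/2)^(2*k+1) /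
      ((Nat.factorial k : ℝ) * (Nat.factorial (k + 2) : ℝ))) _ x :=
    (hp.const_mul ((-1:ℝ)^k * (((k:ℝ)+1)))).div_const
      ((Nat.factorial k : ℝ) * (Nat.factorial (k + 2) : ℝ))
  convert this using 1
  · ext y
    rw [t1]
    ring
  · show t2 x k = _
    rw [t2]
    have : 2*k+1-1 = 2*k := by omega
    rw [this]
    push_cast
    ring

lemma hasDerivAt_bf (x : ℝ) : HasDerivAt bf (bg x) x := by
  set s : ℝ := |x| + 1 with hs
  have hs0 : (0:ℝ) ≤ s := by positivity
  have hmem : x ∈ Set.Ioo (-s) s := by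
    constructor <;> simp [hs] <;> [nlinarith [abs_nonneg x, neg_abs_le x]; nlinarith [le_abs_self x]]
  refine hasDerivAt_tsum_of_isPreconnected (summable_mB s) isOpen_Ioo
    (convex_Ioo _ _).isPreconnected (fun k y hy => hasDerivAt_term0 k y)
    (fun k y hy => ?_) hmem (summable_t0 x) hmem
  · rw [Real.norm_eq_abs]
    exact abs_t1_le hs0 (by rw [abs_le]; constructor <;> [linarith [hy.1]; linarith [hy.2]]) k

lemma hasDerivAt_bg (x : ℝ) : HasDerivAt bg (bh x) x := by
  set s : ℝ := |x| + 1 with hs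
  have hs0 : (0:ℝ) ≤ s := by positivity
  have hmem : x ∈ Set.Ioo (-s) s := by
    constructor <;> simp [hs] <;> [nlinarith [abs_nonneg x, neg_abs_le x]; nlinarith [le_abs_self x]]
  refine hasDerivAt_tsum_of_isPreconnected (summable_mB s) isOpen_Ioo
    (convex_Ioo _ _).isPreconnected (fun k y hy => hasDerivAt_term1 k y)
    (fun k y hy => ?_) hmem (summable_t1 x) hmem
  · rw [Real.norm_eq_abs]
    exact abs_t2_le hs0 (by rw [abs_le]; constructor <;> [linarith [hy.1]; linarith [hy.2]]) k

/-- the Bessel ODE -/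
lemma bessel_ode (x : ℝ) :
    x^2 * bh x + x * bg x + (x^2 - 4) * bf x = 0 := by
  have hT : ∀ k, x^2 * t2 x (k+1) + x * t1 x (k+1) - 4 * t0 x (k+1) = -(x^2 * t0 x k) := by
    intro k
    have e1 : (Nat.factorial (k+1) : ℝ) = ((k:ℝ)+1) * (Nat.factorial k : ℝ) := by
      rw [Nat.factorial_succ]; push_cast; ring
    have e2 : (Nat.factorial (k+3) : ℝ) = ((k:ℝ)+3) * (Nat.factorial (k+2) : ℝ) := by
      rw [show k+3 = (k+2)+1 by omega, Nat.factorial_succ]; push_cast; ring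
    have hfk := (fact_pos k).ne'
    have hfk2 := (fact_pos (k+2)).ne'
    rw [t0, t1, t2, t0, show k+1+2 = k+3 by omega]
    rw [e1, e2]
    have hk1 : ((k:ℝ)+1) ≠ 0 := by positivity
    have hk3 : ((k:ℝ)+3) ≠ 0 := by positivity
    rw [show 2*(k+1)+2 = 2*k+4 by omega, show 2*(k+1)+1 = 2*k+3 by omega,
      show 2*(k+1) = 2*k+2 by omega, pow_succ ((-1:ℝ)) k]
    push_cast
    field_simp
    ring
  have hT0 : x^2 * t2 x 0 + x * t1 x 0 - 4 * t0 x 0 = 0 := by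
    simp [t0, t1, t2, Nat.factorial]
    ring
  have s0 := summable_t0 x
  have s1 := summable_t1 x
  have s2 := summable_t2 x
  have hcomb : Summable (fun k => x^2 * t2 x k + x * t1 x k - 4 * t0 x k) :=
    ((s2.mul_left _).add (s1.mul_left _)).sub (s0.mul_left _)
  have key : ∑' k, (x^2 * t2 x k + x * t1 x k - 4 * t0 x k) = -(x^2 * bf x) := by
    rw [Summable.tsum_eq_zero_add hcomb, hT0, zero_add]
    have : ∀ k:ℕ, x^2 * t2 x (k+1) + x * t1 x (k+1) - 4 * t0 x (k+1) = -(x^2 * t0 x k) :=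
      fun k => hT k
    rw [tsum_congr this, tsum_neg, tsum_mul_left]
    rfl
  have expand : ∑' k, (x^2 * t2 x k + x * t1 x k - 4 * t0 x k)
      = x^2 * bh x + x * bg x - 4 * bf x := by
    rw [Summable.tsum_sub ((s2.mul_left _).add (s1.mul_left _)) (s0.mul_left _),
      Summable.tsum_add (s2.mul_left _) (s1.mul_left _), tsum_mul_left, tsum_mul_left, tsum_mul_left]
    rfl
  rw [expand] at key
  nlinarith [key]

end BesselAux

namespace BesselAux

noncomputable def amp (x : ℝ) : ℝ :=
  x * bf x ^ 2 + x * (bf x + 2*x*bg x)^2 / (4*x^2 - 15)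

lemma denom_pos {x : ℝ} (hx : 2 < x) : 0 < 4*x^2 - 15 := by nlinarith

lemma hasDerivAt_amp {x : ℝ} (hx : 2 < x) :
    HasDerivAt amp (-30 * (bf x + 2*x*bg x)^2 / (4*x^2-15)^2) x := by
  have hx0 : x ≠ 0 := by positivity
  have hD0 : (4*x^2 - 15) ≠ 0 := (denom_pos hx).ne'
  have hf := hasDerivAt_bf x
  have hg := hasDerivAt_bg x
  have hid := hasDerivAt_id x
  have h1 : HasDerivAt (fun y => y * bf y ^ 2) (1 * bf x ^ 2 + x * (2 * bf x ^ 1 * bg x)) x :=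
    hid.mul (hf.pow 2)
  have hu : HasDerivAt (fun y => bf y + 2*y*bg y)
      (bg x + ((2 * 1) * bg x + 2*x * bh x)) x :=
    hf.add ((hid.const_mul 2).mul hg)
  have hN : HasDerivAt (fun y => y * (bf y + 2*y*bg y)^2)
      (1 * (bf x + 2*x*bg x)^2
        + x * (2 * (bf x + 2*x*bg x) ^ 1 * (bg x + ((2 * 1) * bg x + 2*x * bh x)))) x :=
    hid.mul (hu.pow 2)
  have hD : HasDerivAt (fun y : ℝ => 4*y^2 - 15) (4 * ((2:ℕ) * x ^ 1 * 1) - 0) x :=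
    (((hid.pow 2).const_mul 4).sub (hasDerivAt_const x 15))
  have hND := hN.div hD hD0
  have : HasDerivAt amp _ x := h1.add hND
  convert this using 1
  have hODE : bh x = (-(x * bg x) - (x^2-4) * bf x) / x^2 := by
    have h := bessel_ode x
    field_simp
    linarith [h]
  rw [hODE]
  have hD1 : x^2*4 - 15 ≠ 0 := by nlinarith
  field_simp
  ring

lemma amp_antitoneOn : AntitoneOn amp (Set.Ici (5/2 : ℝ)) := by
  have h52 : ∀ y ∈ Set.Ici (5/2 : ℝ), (2:ℝ) < y := fun y hy => by
    have : (5/2 : ℝ) ≤ y := hy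
    linarith
  apply antitoneOn_of_deriv_nonpos (convex_Ici _)
  · intro y hy
    exact (hasDerivAt_amp (h52 y hy)).continuousAt.continuousWithinAt
  · intro y hy
    rw [interior_Ici] at hy
    exact (hasDerivAt_amp (h52 y (show (5/2:ℝ) ≤ y from le_of_lt hy))).differentiableAt.differentiableWithinAt
  · intro y hy
    rw [interior_Ici] at hy
    rw [(hasDerivAt_amp (h52 y (show (5/2:ℝ) ≤ y from le_of_lt hy))).deriv]
    apply div_nonpos_of_nonpos_of_nonneg
    · nlinarith [sq_nonneg (bf y + 2*y*bg y)]
    · positivity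

lemma sq_amp_le {x : ℝ} (hx : (5/2:ℝ) ≤ x) : x * bf x ^ 2 ≤ amp (5/2) := by
  have h2 : (2:ℝ) < x := by linarith
  have : x * bf x ^ 2 ≤ amp x := by
    rw [amp]
    have : 0 ≤ x * (bf x + 2*x*bg x)^2 / (4*x^2 - 15) := by
      apply div_nonneg _ (denom_pos h2).le
      positivity
    linarith
  exact this.trans (amp_antitoneOn (by norm_num : (5/2:ℝ) ∈ Set.Ici (5/2:ℝ)) hx hx)

end BesselAux

namespace BesselAux

lemma abs_t0 (x : ℝ) (k : ℕ) :
    |t0 x k| = |x/2| ^ (2*k+2) / ((Nat.factorial k : ℝ) * (Nat.factorial (k + 2) : ℝ)) := by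
  rw [t0, abs_div, abs_mul, abs_pow, abs_pow, abs_neg, abs_one, one_pow, one_mul,
    abs_mul, Nat.abs_cast, Nat.abs_cast]

lemma abs_t1 (x : ℝ) (k : ℕ) :
    |t1 x k| = ((k:ℝ)+1) * |x/2| ^ (2*k+1) / ((Nat.factorial k : ℝ) * (Nat.factorial (k + 2) : ℝ)) := by
  rw [t1, abs_div, abs_mul, abs_mul, abs_pow, abs_pow, abs_neg, abs_one, one_pow, one_mul,
    abs_mul, Nat.abs_cast, Nat.abs_cast, abs_of_nonneg (by positivity : (0:ℝ) ≤ (k:ℝ)+1)]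

lemma t0_step {x : ℝ} (hx : |x| ≤ 5/2) {k : ℕ} (hk : 2 ≤ k) :
    |t0 x (k+1)| ≤ 1/2 * |t0 x k| := by
  have e1 : (Nat.factorial (k+1) : ℝ) = ((k:ℝ)+1) * (Nat.factorial k : ℝ) := by
    rw [Nat.factorial_succ]; push_cast; ring
  have e2 : (Nat.factorial (k+3) : ℝ) = ((k:ℝ)+3) * (Nat.factorial (k+2) : ℝ) := by
    rw [show k+3 = (k+2)+1 by omega, Nat.factorial_succ]; push_cast; ring
  have hfk := fact_pos k
  have hfk2 := fact_pos (k+2)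
  have ha : |x/2| ≤ 5/4 := by rw [abs_div, abs_two]; linarith
  have ha0 : (0:ℝ) ≤ |x/2| := abs_nonneg _
  have hkr : (2:ℝ) ≤ (k:ℝ) := by exact_mod_cast hk
  have key : |t0 x (k+1)| = |t0 x k| * (|x/2|^2 / (((k:ℝ)+1) * ((k:ℝ)+3))) := by
    rw [abs_t0, abs_t0, show k+1+2 = k+3 by omega, e1, e2,
      show 2*(k+1)+2 = (2*k+2)+2 by omega, pow_add, div_mul_div_comm]
    congr 1
    ring
  rw [key]
  have hq : |x/2|^2 / (((k:ℝ)+1) * ((k:ℝ)+3)) ≤ 1/2 := by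
    rw [div_le_iff₀ (by positivity)]
    nlinarith
  calc |t0 x k| * (|x/2|^2 / (((k:ℝ)+1) * ((k:ℝ)+3)))
      ≤ |t0 x k| * (1/2) := mul_le_mul_of_nonneg_left hq (abs_nonneg _)
    _ = 1/2 * |t0 x k| := by ring

lemma t1_step {x : ℝ} (hx : |x| ≤ 5/2) {k : ℕ} (hk : 3 ≤ k) :
    |t1 x (k+1)| ≤ 1/2 * |t1 x k| := by
  have e1 : (Nat.factorial (k+1) : ℝ) = ((k:ℝ)+1) * (Nat.factorial k : ℝ) := by
    rw [Nat.factorial_succ]; push_cast; ring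
  have e2 : (Nat.factorial (k+3) : ℝ) = ((k:ℝ)+3) * (Nat.factorial (k+2) : ℝ) := by
    rw [show k+3 = (k+2)+1 by omega, Nat.factorial_succ]; push_cast; ring
  have hfk := fact_pos k
  have hfk2 := fact_pos (k+2)
  have ha : |x/2| ≤ 5/4 := by rw [abs_div, abs_two]; linarith
  have ha0 : (0:ℝ) ≤ |x/2| := abs_nonneg _
  have hkr : (3:ℝ) ≤ (k:ℝ) := by exact_mod_cast hk
  have h1 : ((k:ℝ)+1) ≠ 0 := by positivity
  have h3 : ((k:ℝ)+3) ≠ 0 := by positivity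
  have key : |t1 x (k+1)| = |t1 x k| *
      ((((k:ℝ)+2) * |x/2|^2) / (((k:ℝ)+1)^2 * ((k:ℝ)+3))) := by
    rw [abs_t1, abs_t1, show k+1+2 = k+3 by omega, e1, e2,
      show 2*(k+1)+1 = (2*k+1)+2 by omega, pow_add, div_mul_div_comm,
      div_eq_div_iff (by positivity) (by positivity)]
    push_cast
    ring
  rw [key]
  have hq : (((k:ℝ)+2) * |x/2|^2) / (((k:ℝ)+1)^2 * ((k:ℝ)+3)) ≤ 1/2 := by
    rw [div_le_iff₀ (by positivity)]
    have ha2 : |x/2|^2 ≤ 25/16 := by nlinarith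
    have hm : ((k:ℝ)+2) * |x/2|^2 ≤ ((k:ℝ)+2) * (25/16) :=
      mul_le_mul_of_nonneg_left ha2 (by positivity)
    nlinarith [hkr, sq_nonneg ((k:ℝ)-3), sq_nonneg ((k:ℝ)+1)]
  calc |t1 x k| * ((((k:ℝ)+2) * |x/2|^2) / (((k:ℝ)+1)^2 * ((k:ℝ)+3)))
      ≤ |t1 x k| * (1/2) := mul_le_mul_of_nonneg_left hq (abs_nonneg _)
    _ = 1/2 * |t1 x k| := by ring

lemma abs_tsum_le_geom (c : ℕ → ℝ) (hc : Summable c)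
    (hstep : ∀ k, |c (k+1)| ≤ 1/2 * |c k|) : |∑' k, c k| ≤ 2 * |c 0| := by
  have hb : ∀ k, |c k| ≤ |c 0| * (1/2)^k := by
    intro k
    induction k with
    | zero => simp
    | succ n ih =>
        calc |c (n+1)| ≤ 1/2 * |c n| := hstep n
          _ ≤ 1/2 * (|c 0| * (1/2)^n) := by linarith
          _ = |c 0| * (1/2)^(n+1) := by ring
  have habs : Summable (fun k => |c k|) := hc.abs
  have hgeom : Summable (fun k : ℕ => |c 0| * (1/2:ℝ)^k) :=
    (summable_geometric_of_lt_one (by norm_num) (by norm_num)).mul_left _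
  have h1 : |∑' k, c k| ≤ ∑' k, |c k| := by
    simpa [Real.norm_eq_abs] using
      norm_tsum_le_tsum_norm (f := c) (by simpa [Real.norm_eq_abs] using habs)
  have h2 : ∑' k, |c k| ≤ ∑' k, |c 0| * (1/2:ℝ)^k := Summable.tsum_le_tsum hb habs hgeom
  have h3 : ∑' k : ℕ, |c 0| * (1/2:ℝ)^k = |c 0| * 2 := by
    rw [tsum_mul_left, tsum_geometric_two]
  linarith

end BesselAux

namespace BesselAux

lemma bf52_bounds : 0.4444 ≤ bf (5/2) ∧ bf (5/2) ≤ 0.4467 := by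
  have hs : |(5/2:ℝ)| ≤ 5/2 := by rw [abs_of_nonneg] <;> norm_num
  have hsum := summable_t0 (5/2:ℝ)
  have hshift : Summable (fun k => t0 (5/2) (k+4)) := (summable_nat_add_iff 4).2 hsum
  have hdec : (∑ i ∈ Finset.range 4, t0 (5/2) i) + ∑' i, t0 (5/2) (i+4) = bf (5/2) :=
    Summable.sum_add_tsum_nat_add 4 hsum
  have htail : |∑' i, t0 (5/2) (i+4)| ≤ 2 * |t0 (5/2) (0+4)| :=
    abs_tsum_le_geom _ hshift (fun k => by
      simpa [show k+1+4 = (k+4)+1 by omega] using t0_step hs (show 2 ≤ k+4 by omega))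
  have hpart : (∑ i ∈ Finset.range 4, t0 (5/2) i)
      = 25/32 - 625/1536 + 15625/196608 - 390625/47185920 := by
    rw [Finset.sum_range_succ, Finset.sum_range_succ, Finset.sum_range_succ,
      Finset.sum_range_one]
    norm_num [t0, Nat.factorial]
  have ht04 : |t0 (5/2) (0+4)| = 9765625/18119393280 := by
    rw [abs_t0]
    rw [show |(5:ℝ)/2/2| = 5/4 by rw [abs_of_nonneg] <;> norm_num]
    norm_num [Nat.factorial]
  rw [ht04] at htail
  rw [hpart] at hdec
  rw [abs_le] at htail
  constructor <;> nlinarith [htail.1, htail.2]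

lemma bg52_bounds : 0.1338 ≤ bg (5/2) ∧ bg (5/2) ≤ 0.1426 := by
  have hs : |(5/2:ℝ)| ≤ 5/2 := by rw [abs_of_nonneg] <;> norm_num
  have hsum := summable_t1 (5/2:ℝ)
  have hshift : Summable (fun k => t1 (5/2) (k+4)) := (summable_nat_add_iff 4).2 hsum
  have hdec : (∑ i ∈ Finset.range 4, t1 (5/2) i) + ∑' i, t1 (5/2) (i+4) = bg (5/2) :=
    Summable.sum_add_tsum_nat_add 4 hsum
  have htail : |∑' i, t1 (5/2) (i+4)| ≤ 2 * |t1 (5/2) (0+4)| :=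
    abs_tsum_le_geom _ hshift (fun k => by
      simpa [show k+1+4 = (k+4)+1 by omega] using t1_step hs (show 3 ≤ k+4 by omega))
  have hpart : (∑ i ∈ Finset.range 4, t1 (5/2) i)
      = 5/8 - 125/192 + 3125/16384 - 78125/2949120 := by
    rw [Finset.sum_range_succ, Finset.sum_range_succ, Finset.sum_range_succ,
      Finset.sum_range_one]
    norm_num [t1, Nat.factorial]
  have ht14 : |t1 (5/2) (0+4)| = 1953125/905969664 := by
    rw [abs_t1]
    rw [show |(5:ℝ)/2/2| = 5/4 by rw [abs_of_nonneg] <;> norm_num]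
    norm_num [Nat.factorial]
  rw [ht14] at htail
  rw [hpart] at hdec
  rw [abs_le] at htail
  constructor <;> nlinarith [htail.1, htail.2]

lemma amp52_le_one : amp (5/2) ≤ 1 := by
  obtain ⟨hF1, hF2⟩ := bf52_bounds
  obtain ⟨hG1, hG2⟩ := bg52_bounds
  rw [amp]
  have hFsq : bf (5/2) ^ 2 ≤ 0.4467 ^ 2 := by nlinarith
  have hsum : bf (5/2) + 2*(5/2)*bg (5/2) ≤ 0.4467 + 5 * 0.1426 := by nlinarith
  have hsum0 : 0 ≤ bf (5/2) + 2*(5/2)*bg (5/2) := by nlinarith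
  have hsumsq : (bf (5/2) + 2*(5/2)*bg (5/2))^2 ≤ (0.4467 + 5 * 0.1426)^2 := by nlinarith
  have hden : (4*(5/2:ℝ)^2 - 15) = 10 := by norm_num
  rw [hden]
  nlinarith

lemma small_bound {x : ℝ} (hx0 : 0 ≤ x) (hx : x ≤ 5/2) : x * bf x ^ 2 ≤ 1 := by
  have habs : |x| ≤ 5/2 := abs_le.mpr ⟨by linarith, hx⟩
  have hsum := summable_t0 x
  have hshift : Summable (fun k => t0 x (k+2)) := (summable_nat_add_iff 2).2 hsum
  have hdec : (∑ i ∈ Finset.range 2, t0 x i) + ∑' i, t0 x (i+2) = bf x :=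
    Summable.sum_add_tsum_nat_add 2 hsum
  have htail : |∑' i, t0 x (i+2)| ≤ 2 * |t0 x (0+2)| :=
    abs_tsum_le_geom _ hshift (fun k => by
      simpa [show k+1+2 = (k+2)+1 by omega] using t0_step habs (show 2 ≤ k+2 by omega))
  have ht02 : |t0 x (0+2)| = x^6/(64*48) := by
    rw [abs_t0]
    rw [show |x/2| = x/2 by rw [abs_of_nonneg]; linarith]
    norm_num [Nat.factorial]
    ring
  have hpart : (∑ i ∈ Finset.range 2, t0 x i) = x^2/8 - x^4/96 := by
    rw [Finset.sum_range_succ, Finset.sum_range_one]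
    norm_num [t0, Nat.factorial]
    ring
  rw [ht02] at htail
  rw [hpart] at hdec
  rw [abs_le] at htail
  have hx2 : x^2 ≤ 25/4 := by nlinarith
  have hx4 : x^4 ≤ 625/16 := by nlinarith
  have hlow : 0 ≤ bf x := by nlinarith [htail.1, sq_nonneg x, mul_nonneg (mul_nonneg hx0 hx0) (mul_nonneg hx0 hx0)]
  have hup : bf x ≤ x^2/8 - x^4/96 + x^6/1536 := by nlinarith [htail.2]
  have hU : x^2/8 - x^4/96 + x^6/1536 ≤ 0.54 := by
    have h1 : (0:ℝ) ≤ 25/4 - x^2 := by linarith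
    have h2 : (0:ℝ) ≤ x^4 - (39/4)*x^2 + 131 := by nlinarith [sq_nonneg (x^2 - 39/8)]
    nlinarith [mul_nonneg h1 h2]
  nlinarith [hlow, hup, hU]

lemma sq_bound_to_rpow {x y : ℝ} (hx : 0 < x) (h : x * y^2 ≤ 1) : |y| ≤ x ^ (-(1/2):ℝ) := by
  have hs : 0 < Real.sqrt x := Real.sqrt_pos.mpr hx
  have hrw : x ^ (-(1/2):ℝ) = (Real.sqrt x)⁻¹ := by
    rw [Real.rpow_neg hx.le, ← Real.sqrt_eq_rpow]
  rw [hrw]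
  have h2 : (|y| * Real.sqrt x)^2 ≤ 1 := by
    rw [mul_pow, sq_abs, Real.sq_sqrt hx.le]
    nlinarith
  have h3 : |y| * Real.sqrt x ≤ 1 := by
    nlinarith [mul_nonneg (abs_nonneg y) hs.le]
  rw [inv_eq_one_div, le_div_iff₀ hs]
  exact h3

end BesselAux

/-- For real `x > 0`, the Bessel function of the first kind of order 2,
`J₂(x) = ∑_{k≥0} (−1)^k (x/2)^{2k+2} / (k! (k+2)!)`, satisfies `|J₂(x)| ≤ x^{−1/2}`. -/
theorem besselJ_two_bound (J₂ : ℝ → ℝ)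
    (hJ : ∀ x : ℝ, J₂ x = ∑' k : ℕ,
      (-1 : ℝ) ^ k * (x / 2) ^ (2 * k + 2) / ((Nat.factorial k : ℝ) * (Nat.factorial (k + 2) : ℝ)))
    (x : ℝ) (hx : 0 < x) :
    |J₂ x| ≤ x ^ (-(1 / 2) : ℝ) := by
  have hfx : J₂ x = BesselAux.bf x := by rw [hJ x]; rfl
  rw [hfx]
  apply BesselAux.sq_bound_to_rpow hx
  rcases le_or_gt x (5/2) with h | h
  · exact BesselAux.small_bound hx.le h
  · have h1 := BesselAux.sq_amp_le h.le
    have h2 := BesselAux.amp52_le_one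
    linarith
end

section
/- For all real t, |Γ(3/2 − it) / Γ(−1 + it)| ≤ |(1/2 + it)(−1 + it)| · √|t|. -/
open Complex

lemma normA (t : ℝ) : ‖Complex.Gamma (1/2 - t*I)‖ ^ 2 = Real.pi / Real.cosh (Real.pi * t) := by
  have h := Complex.Gamma_mul_Gamma_one_sub (1/2 - t*I)
  have h1 : (1 : ℂ) - (1/2 - t*I) = (starRingEnd ℂ) (1/2 - t*I) := by
    simp [Complex.ext_iff]; ring
  rw [h1, Complex.Gamma_conj, Complex.mul_conj'] at h
  have h2 : Complex.sin (↑Real.pi * (1/2 - t*I)) = ↑(Real.cosh (Real.pi * t)) := by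
    have : (↑Real.pi : ℂ) * (1/2 - t*I) = ↑Real.pi/2 - (↑(Real.pi * t)) * I := by push_cast; ring
    rw [this, Complex.sin_pi_div_two_sub, Complex.cos_mul_I, Complex.ofReal_cosh]
  rw [h2, ← Complex.ofReal_pow, ← Complex.ofReal_div] at h
  exact_mod_cast h

lemma normB (t : ℝ) (ht : t ≠ 0) :
    ‖Complex.Gamma (1 + t*I)‖ ^ 2 = Real.pi * t / Real.sinh (Real.pi * t) := by
  have hI : (t : ℂ) * I ≠ 0 := by
    simp [Complex.ext_iff, ht]
  have hG : Complex.Gamma ((t : ℂ)*I + 1) = (t*I) * Complex.Gamma (t*I) :=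
    Complex.Gamma_add_one _ hI
  have h := Complex.Gamma_mul_Gamma_one_sub ((t : ℂ)*I)
  have h1 : (1 : ℂ) - (t*I) = (starRingEnd ℂ) (1 + t*I) := by
    simp [Complex.ext_iff]
  have hsin : Complex.sin (↑Real.pi * (↑t*I)) = ↑(Real.sinh (Real.pi * t)) * I := by
    have : (↑Real.pi : ℂ) * (↑t*I) = (↑(Real.pi * t)) * I := by push_cast; ring
    rw [this, Complex.sin_mul_I, Complex.ofReal_sinh]
  have hs : Real.sinh (Real.pi * t) ≠ 0 := by
    simp [Real.sinh_eq_zero, Real.pi_ne_zero, ht]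
  have key : Complex.Gamma (1 + t*I) * (starRingEnd ℂ) (Complex.Gamma (1 + t*I))
      = ↑(Real.pi * t / Real.sinh (Real.pi * t)) := by
    rw [← Complex.Gamma_conj, ← h1]
    have : Complex.Gamma (1 + ↑t*I) = (↑t*I) * Complex.Gamma (↑t*I) := by
      rw [← hG]; ring_nf
    rw [this, mul_assoc, h, hsin]
    have hsC : (↑(Real.sinh (Real.pi * t)) : ℂ) ≠ 0 := by exact_mod_cast hs
    field_simp
    rw [Complex.ofReal_div, mul_div_cancel₀ _ hsC]; push_cast; ring
  rw [Complex.mul_conj', ← Complex.ofReal_pow] at key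
  exact_mod_cast key

lemma abs_sinh_lt_cosh (x : ℝ) : |Real.sinh x| < Real.cosh x := by
  rw [Real.abs_sinh, ← Real.cosh_abs]
  have h := Real.exp_pos (-|x|)
  rw [Real.sinh_eq, Real.cosh_eq]
  linarith


/-- For all real `t`, `|Γ(3/2 − it)/Γ(−1 + it)| ≤ |(1/2 + it)(−1 + it)| · √|t|`. -/
theorem gamma_quotient_bound (t : ℝ) :
    ‖Complex.Gamma (3 / 2 - t * Complex.I) / Complex.Gamma (-1 + t * Complex.I)‖
      ≤ ‖(1 / 2 + t * Complex.I) * (-1 + t * Complex.I)‖ * Real.sqrt |t| := by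
  rcases eq_or_ne t 0 with rfl | ht
  · rw [show ((0:ℝ):ℂ) * I = 0 by simp, add_zero,
      show (-1:ℂ) = -(1:ℕ) by simp, Complex.Gamma_neg_nat_eq_zero]
    simp
  -- nonvanishing facts
  have htI : (t : ℂ) * I ≠ 0 := by simp [Complex.ext_iff, ht]
  have hm1 : (-1 : ℂ) + t * I ≠ 0 := by simp [Complex.ext_iff, ht]
  have hhalf : (1/2 : ℂ) - t * I ≠ 0 := by
    simp [Complex.ext_iff]
  have hΓ1 : Complex.Gamma (1 + t * I) ≠ 0 := by
    apply Complex.Gamma_ne_zero_of_re_pos; simp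
  -- functional equation steps
  have a1 : Complex.Gamma ((t:ℂ) * I) = (-1 + t*I) * Complex.Gamma (-1 + t*I) := by
    have h := Complex.Gamma_add_one (-1 + t*I) hm1
    rw [show (-1 : ℂ) + t*I + 1 = t*I from by ring] at h
    exact h
  have e1 : Complex.Gamma (1 + t*I) = (t*I) * ((-1 + t*I) * Complex.Gamma (-1 + t*I)) := by
    have h := Complex.Gamma_add_one ((t:ℂ)*I) htI
    rw [show (t:ℂ)*I + 1 = 1 + t*I from by ring] at h
    rw [h, a1]
  have e2 : Complex.Gamma (3/2 - t*I) = (1/2 - t*I) * Complex.Gamma (1/2 - t*I) := by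
    have h := Complex.Gamma_add_one ((1/2 : ℂ) - t*I) hhalf
    rw [show (1/2:ℂ) - t*I + 1 = 3/2 - t*I from by ring] at h
    exact h
  have hΓm1 : Complex.Gamma (-1 + t * I) ≠ 0 := by
    intro h0
    rw [h0, mul_zero, mul_zero] at e1
    exact hΓ1 e1
  -- rewrite the quotient
  have eq1 : Complex.Gamma (3/2 - t*I) / Complex.Gamma (-1 + t*I)
      = (1/2 - t*I) * (t*I) * (-1 + t*I) * (Complex.Gamma (1/2 - t*I) / Complex.Gamma (1 + t*I)) := by
    rw [e2, e1]
    have htC : (t:ℂ) ≠ 0 := by exact_mod_cast ht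
    field_simp
  rw [eq1]
  have hconj : ‖(1/2 : ℂ) - t*I‖ = ‖(1/2 : ℂ) + t*I‖ := by
    rw [show (1/2 : ℂ) - t*I = (starRingEnd ℂ) (1/2 + t*I) from by simp [Complex.ext_iff], RCLike.norm_conj]
  have hnormtI : ‖(t:ℂ) * I‖ = |t| := by
    simp [Complex.norm_def, Complex.normSq_apply, Real.sqrt_sq_eq_abs]
  rw [norm_mul, norm_mul, norm_mul, norm_div, hconj, hnormtI]
  rw [norm_mul]
  rw [show ‖(1/2 : ℂ) + t*I‖ * |t| * ‖(-1:ℂ) + t*I‖ * (‖Complex.Gamma (1/2 - t*I)‖ / ‖Complex.Gamma (1 + t*I)‖)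
      = (‖(1/2 : ℂ) + t*I‖ * ‖(-1:ℂ) + t*I‖) * (|t| * ‖Complex.Gamma (1/2 - t*I)‖ / ‖Complex.Gamma (1 + t*I)‖) from by ring]
  apply mul_le_mul_of_nonneg_left _ (by positivity)
  -- key analytic inequality
  rw [div_le_iff₀ (norm_pos_iff.mpr hΓ1)]
  -- reduce to squares
  have hA := normA t
  have hB := normB t ht
  have hs0 : Real.sinh (Real.pi * t) ≠ 0 := by
    simp [Real.sinh_eq_zero, Real.pi_ne_zero, ht]
  have hc0 : (0:ℝ) < Real.cosh (Real.pi * t) := Real.cosh_pos _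
  have hkey : (|t| * ‖Complex.Gamma (1/2 - t*I)‖)^2
      ≤ (Real.sqrt |t| * ‖Complex.Gamma (1 + t*I)‖)^2 := by
    rw [mul_pow, mul_pow, hA, hB, Real.sq_sqrt (abs_nonneg t)]
    have hts : Real.pi * t / Real.sinh (Real.pi * t) = Real.pi * |t| / |Real.sinh (Real.pi * t)| := by
      rcases lt_or_gt_of_ne ht with h | h
      · rw [abs_of_neg h, abs_of_neg (by simpa using Real.sinh_neg_iff.mpr (by nlinarith [Real.pi_pos] : Real.pi * t < 0))]
        field_simp
      · rw [abs_of_pos h, abs_of_pos (Real.sinh_pos_iff.mpr (by positivity))]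
    rw [hts]
    have hlt : |Real.sinh (Real.pi * t)| ≤ Real.cosh (Real.pi * t) := (abs_sinh_lt_cosh _).le
    have habs : (0:ℝ) < |Real.sinh (Real.pi * t)| := abs_pos.mpr hs0
    calc |t|^2 * (Real.pi / Real.cosh (Real.pi * t))
        = Real.pi * |t|^2 / Real.cosh (Real.pi * t) := by ring
      _ ≤ Real.pi * |t|^2 / |Real.sinh (Real.pi * t)| := by
          apply div_le_div_of_nonneg_left (by positivity) habs hlt
      _ = |t| * (Real.pi * |t| / |Real.sinh (Real.pi * t)|) := by
          rw [sq]; ring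
  have h1 : 0 ≤ |t| * ‖Complex.Gamma (1/2 - t*I)‖ := by positivity
  have h2 : 0 ≤ Real.sqrt |t| * ‖Complex.Gamma (1 + t*I)‖ := by positivity
  have := Real.sqrt_le_sqrt hkey
  rwa [Real.sqrt_sq h1, Real.sqrt_sq h2] at this
end
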